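/- Let k be a positive integer. For every S(3k-1)-space X, ψ_{2k-1}(X) ≤ 2^{s_{2k}(X)} and ψ_{2k}(X) ≤ 2^{s_{2k-1}(X)}. -/
import Mathlib


open Cardinal Set

universe u

variable {X : Type u}

/-- `x` is S(n)-separated from `A`. -/
def SSep [TopologicalSpace X] : ℕ → X → Set X → Prop
  | 0, x, A => x ∉ closure A
  | (n+1), x, A => ∃ U : ℕ → Set X, (∀ i ≤ n, IsOpen (U i)) ∧ x ∈ U 0 ∧
      (∀ i < n, closure (U i) ⊆ U (i+1)) ∧ closure (U n) ∩ A = ∅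

/-- `X` is an S(n)-space. -/
def SSpace (n : ℕ) (X : Type u) [TopologicalSpace X] : Prop :=
  ∀ x y : X, x ≠ y → SSep n x {y}

/-- `U` is an S(2k-1)-neighborhood of `x` (for `k ≥ 1`). -/
def SOddNhd [TopologicalSpace X] (k : ℕ) (x : X) (U : Set X) : Prop :=
  ∃ V : ℕ → Set X, (∀ i < k, IsOpen (V i)) ∧ x ∈ V 0 ∧
    (∀ i, i + 1 < k → closure (V i) ⊆ V (i+1)) ∧ V (k-1) ⊆ U

/-- `U` is an S(2k)-neighborhood of `x` (for `k ≥ 1`). -/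
def SEvenNhd [TopologicalSpace X] (k : ℕ) (x : X) (U : Set X) : Prop :=
  ∃ V : ℕ → Set X, (∀ i < k, IsOpen (V i)) ∧ x ∈ V 0 ∧
    (∀ i, i + 1 < k → closure (V i) ⊆ V (i+1)) ∧ closure (V (k-1)) ⊆ U

/-- `U` is an open S(2k-1)-neighborhood of `x`. -/
def SOpenNhd [TopologicalSpace X] (k : ℕ) (x : X) (U : Set X) : Prop :=
  IsOpen U ∧ SOddNhd k x U

/-- `U` is an S(2k-1)-open set. -/
def SOpen [TopologicalSpace X] (k : ℕ) (U : Set X) : Prop :=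
  IsOpen U ∧ ∃ x, SOddNhd k x U

/-- The S(2k-1)-closure `θ_{2k-1}(A)`. -/
def thetaOdd [TopologicalSpace X] (k : ℕ) (A : Set X) : Set X :=
  {x | ∀ U : Set X, SOpenNhd k x U → (U ∩ A).Nonempty}

/-- The S(2k)-closure `θ_{2k}(A)`. -/
def thetaEven [TopologicalSpace X] (k : ℕ) (A : Set X) : Set X :=
  {x | ∀ U : Set X, SOpenNhd k x U → (closure U ∩ A).Nonempty}

/-- `D` is S(2k-1)-discrete. -/
def SOddDiscrete [TopologicalSpace X] (k : ℕ) (D : Set X) : Prop :=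
  ∀ x ∈ D, ∃ U : Set X, SOpenNhd k x U ∧ U ∩ D = {x}

/-- `D` is S(2k)-discrete. -/
def SEvenDiscrete [TopologicalSpace X] (k : ℕ) (D : Set X) : Prop :=
  ∀ x ∈ D, ∃ U : Set X, SOpenNhd k x U ∧ closure U ∩ D = {x}

/-- The S(2k-1)-spread `s_{2k-1}(X)`. -/
noncomputable def spreadOdd (k : ℕ) (X : Type u) [TopologicalSpace X] : Cardinal :=
  (⨆ D : {D : Set X // SOddDiscrete k D}, #D.1) ⊔ Cardinal.aleph0

/-- The S(2k)-spread `s_{2k}(X)`. -/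
noncomputable def spreadEven (k : ℕ) (X : Type u) [TopologicalSpace X] : Cardinal :=
  (⨆ D : {D : Set X // SEvenDiscrete k D}, #D.1) ⊔ Cardinal.aleph0

/-- The S(2k-1)-cellularity `c_{2k-1}(X)`. -/
noncomputable def cellOdd (k : ℕ) (X : Type u) [TopologicalSpace X] : Cardinal :=
  (⨆ F : {F : Set (Set X) // (∀ U ∈ F, SOpen k U ∧ U.Nonempty) ∧
      (∀ U ∈ F, ∀ V ∈ F, U ≠ V → U ∩ V = ∅)}, #F.1) ⊔ Cardinal.aleph0

/-- The S(2k)-cellularity `c_{2k}(X)`. -/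
noncomputable def cellEven (k : ℕ) (X : Type u) [TopologicalSpace X] : Cardinal :=
  (⨆ F : {F : Set (Set X) // (∀ U ∈ F, SOpen k U ∧ U.Nonempty) ∧
      (∀ U ∈ F, ∀ V ∈ F, U ≠ V → closure U ∩ closure V = ∅)}, #F.1) ⊔ Cardinal.aleph0

/-- The S(2k-1)-character `χ_{2k-1}(X)`. -/
noncomputable def charOdd (k : ℕ) (X : Type u) [TopologicalSpace X] : Cardinal :=
  sInf {c | Cardinal.aleph0 ≤ c ∧ ∀ x : X, ∃ B : Set (Set X), #B ≤ c ∧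
    (∀ U ∈ B, SOpenNhd k x U) ∧
    ∀ U : Set X, SOpenNhd k x U → ∃ V ∈ B, V ⊆ U}

/-- The S(2k)-character `χ_{2k}(X)`. -/
noncomputable def charEven (k : ℕ) (X : Type u) [TopologicalSpace X] : Cardinal :=
  sInf {c | Cardinal.aleph0 ≤ c ∧ ∀ x : X, ∃ B : Set (Set X), #B ≤ c ∧
    (∀ V ∈ B, IsClosed V ∧ SOddNhd k x V) ∧
    ∀ W : Set X, SOpenNhd k x W → ∃ V ∈ B, V ⊆ closure W}

/-- The S(2k-1)-pseudocharacter `ψ_{2k-1}(X)`. -/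
noncomputable def psiOdd (k : ℕ) (X : Type u) [TopologicalSpace X] : Cardinal :=
  sInf {c | Cardinal.aleph0 ≤ c ∧ ∀ x : X, ∃ B : Set (Set X), #B ≤ c ∧
    (∀ U ∈ B, SOpenNhd k x U) ∧ ⋂₀ B = {x}}

/-- The S(2k)-pseudocharacter `ψ_{2k}(X)`. -/
noncomputable def psiEven (k : ℕ) (X : Type u) [TopologicalSpace X] : Cardinal :=
  sInf {c | Cardinal.aleph0 ≤ c ∧ ∀ x : X, ∃ B : Set (Set X), #B ≤ c ∧
    (∀ U ∈ B, SOpenNhd k x U) ∧ (⋂ U ∈ B, closure U) = {x}}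

/-- The usual pseudocharacter `ψ(X)`. -/
noncomputable def psi (X : Type u) [TopologicalSpace X] : Cardinal :=
  sInf {c | Cardinal.aleph0 ≤ c ∧ ∀ x : X, ∃ B : Set (Set X), #B ≤ c ∧
    (∀ U ∈ B, IsOpen U) ∧ ⋂₀ B = {x}}


section Aux

variable [TopologicalSpace X]

/-- A chain of open sets of length `m+1` with nested closures. -/
def SChain (m : ℕ) (W : ℕ → Set X) : Prop :=
  (∀ i ≤ m, IsOpen (W i)) ∧ ∀ i < m, closure (W i) ⊆ W (i+1)

lemma SChain.subset_succ {m : ℕ} {W : ℕ → Set X} (hW : SChain m W) {i : ℕ} (hi : i < m) :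
    W i ⊆ W (i+1) :=
  subset_closure.trans (hW.2 i hi)

lemma SChain.mono {m : ℕ} {W : ℕ → Set X} (hW : SChain m W) :
    ∀ j, j ≤ m → ∀ i, i ≤ j → W i ⊆ W j := by
  intro j hj
  induction j with
  | zero =>
    intro i hi
    have : i = 0 := by omega
    subst this; exact subset_rfl
  | succ n ih =>
    intro i hi
    rcases Nat.lt_or_ge i (n+1) with hlt | hge
    · exact (ih (by omega) i (by omega)).trans (hW.subset_succ (by omega))
    · have : i = n + 1 := by omega
      subst this; exact subset_rfl

lemma SChain.closure_subset {m : ℕ} {W : ℕ → Set X} (hW : SChain m W) {i j : ℕ}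
    (hij : i < j) (hj : j ≤ m) : closure (W i) ⊆ W j :=
  (hW.2 i (by omega)).trans (hW.mono j hj (i+1) (by omega))

/-- Going up a chain gives an open S(2k-1)-neighborhood of a point of `W 0`. -/
lemma SChain.upNhd {k m : ℕ} (hk : 1 ≤ k) {W : ℕ → Set X} (hW : SChain m W)
    (hkm : k - 1 ≤ m) {x : X} (hx : x ∈ W 0) : SOpenNhd k x (W (k-1)) := by
  refine ⟨hW.1 _ hkm, W, fun i hi => hW.1 i (by omega), hx, fun i hi => hW.2 i (by omega),
    subset_rfl⟩

/-- Going down a chain by complements of closures gives an open S(2k-1)-neighborhood. -/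
lemma SChain.downNhd {k m : ℕ} (hk : 1 ≤ k) {W : ℕ → Set X} (hW : SChain m W)
    {j : ℕ} (hjm : j + (k - 1) ≤ m) {x : X} (hx : x ∉ closure (W (j + (k-1)))) :
    SOpenNhd k x (closure (W j))ᶜ := by
  refine ⟨isClosed_closure.isOpen_compl, fun i => (closure (W (j + (k-1) - i)))ᶜ,
    fun i hi => isClosed_closure.isOpen_compl, by simpa using hx, ?_, ?_⟩
  · intro i hi
    have e : j + (k-1) - i = (j + (k-1) - (i+1)) + 1 := by omega
    have h1 : closure ((closure (W (j + (k-1) - i)))ᶜ) ⊆ (W (j + (k-1) - i))ᶜ :=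
      closure_minimal (compl_subset_compl.2 subset_closure)
        (hW.1 _ (by omega)).isClosed_compl
    refine h1.trans ?_
    rw [e]
    exact compl_subset_compl.2 (hW.2 _ (by omega))
  · show (closure (W (j + (k-1) - (k-1))))ᶜ ⊆ (closure (W j))ᶜ
    have e : j + (k-1) - (k-1) = j := by omega
    rw [e]

lemma SOpenNhd.mem {k : ℕ} {x : X} {U : Set X} (hU : SOpenNhd k x U) : x ∈ U := by
  obtain ⟨-, V, hVo, hx0, hVc, hVU⟩ := hU
  have : ∀ i, i ≤ k - 1 → x ∈ V i := by
    intro i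
    induction i with
    | zero => intro _; exact hx0
    | succ n ih =>
      intro hn
      exact (subset_closure.trans (hVc n (by omega))) (ih (by omega))
  exact hVU (this (k-1) le_rfl)

lemma SOpenNhd.inter {k : ℕ} (hk : 1 ≤ k) {x : X} {U U' : Set X} (hU : SOpenNhd k x U)
    (hU' : SOpenNhd k x U') : SOpenNhd k x (U ∩ U') := by
  obtain ⟨hUo, V, hVo, hx0, hVc, hVU⟩ := hU
  obtain ⟨hUo', V', hVo', hx0', hVc', hVU'⟩ := hU'
  refine ⟨hUo.inter hUo', fun i => V i ∩ V' i, fun i hi => (hVo i hi).inter (hVo' i hi),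
    ⟨hx0, hx0'⟩, fun i hi => ?_, inter_subset_inter hVU hVU'⟩
  exact (closure_inter_subset_inter_closure _ _).trans
    (inter_subset_inter (hVc i hi) (hVc' i hi))

lemma SOpenNhd.univ {k : ℕ} (x : X) : SOpenNhd k x (Set.univ : Set X) :=
  ⟨isOpen_univ, fun _ => Set.univ, fun _ _ => isOpen_univ, mem_univ x,
    fun _ _ => by simp, subset_univ _⟩

lemma thetaEven_mono {k : ℕ} {A B : Set X} (hAB : A ⊆ B) : thetaEven k A ⊆ thetaEven k B :=
  fun _ hx U hU => ((hx U hU).mono (inter_subset_inter_right _ hAB))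

lemma thetaOdd_mono {k : ℕ} {A B : Set X} (hAB : A ⊆ B) : thetaOdd k A ⊆ thetaOdd k B :=
  fun _ hx U hU => ((hx U hU).mono (inter_subset_inter_right _ hAB))

lemma subset_thetaEven {k : ℕ} {A : Set X} : A ⊆ thetaEven k A :=
  fun x hx U hU => ⟨x, subset_closure hU.mem, hx⟩

lemma subset_thetaOdd {k : ℕ} {A : Set X} : A ⊆ thetaOdd k A :=
  fun x hx U hU => ⟨x, hU.mem, hx⟩

lemma notMem_thetaEven {k : ℕ} {A : Set X} {x : X} (hx : x ∉ thetaEven k A) :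
    ∃ U, SOpenNhd k x U ∧ closure U ∩ A = ∅ := by
  simp only [thetaEven, mem_setOf_eq, not_forall] at hx
  obtain ⟨U, hU, hne⟩ := hx
  exact ⟨U, hU, not_nonempty_iff_eq_empty.mp hne⟩

lemma notMem_thetaOdd {k : ℕ} {A : Set X} {x : X} (hx : x ∉ thetaOdd k A) :
    ∃ U, SOpenNhd k x U ∧ U ∩ A = ∅ := by
  simp only [thetaOdd, mem_setOf_eq, not_forall] at hx
  obtain ⟨U, hU, hne⟩ := hx
  exact ⟨U, hU, not_nonempty_iff_eq_empty.mp hne⟩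

end Aux

section Main

variable [TopologicalSpace X]

lemma sspace_chain {k : ℕ} (hk : 1 ≤ k) (h : SSpace (3*k-1) X) (p : X) :
    ∃ W : X → ℕ → Set X, ∀ y, y ≠ p → SChain (3*k-2) (W y) ∧ y ∈ W y 0 ∧
      p ∉ closure (W y (3*k-2)) := by
  have key : ∀ y : X, ∃ Wy : ℕ → Set X, y ≠ p → SChain (3*k-2) Wy ∧ y ∈ Wy 0 ∧
      p ∉ closure (Wy (3*k-2)) := by
    intro y
    by_cases hy : y = p
    · exact ⟨fun _ => ∅, fun hne => absurd hy hne⟩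
    · have hs := h y p hy
      have e : 3*k-1 = (3*k-2)+1 := by omega
      rw [e] at hs
      obtain ⟨U, h1, h2, h3, h4⟩ := hs
      refine ⟨U, fun _ => ⟨⟨h1, h3⟩, h2, fun hp => ?_⟩⟩
      have : p ∈ closure (U (3*k-2)) ∩ {p} := ⟨hp, rfl⟩
      rw [h4] at this
      exact this
  choose W hW using key
  exact ⟨W, hW⟩

lemma exists_base_odd {k : ℕ} (hk : 1 ≤ k) (h : SSpace (3*k-1) X) (p : X) :
    ∃ B : Set (Set X), #B ≤ 2 ^ spreadEven k X ∧ (∀ U ∈ B, SOpenNhd k p U) ∧ ⋂₀ B = {p} := by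
  classical
  obtain ⟨W, hW⟩ := sspace_chain hk h p
  -- basic facts about the chains
  have hVnhd : ∀ y, y ≠ p → SOpenNhd k y (W y (k-1)) := fun y hy =>
    (hW y hy).1.upNhd hk (by omega) (hW y hy).2.1
  have hGnhd : ∀ y, y ≠ p → SOpenNhd k p (closure (W y (2*k-1)))ᶜ := by
    intro y hy
    refine (hW y hy).1.downNhd hk (j := 2*k-1) (by omega) ?_
    have e : 2*k-1+(k-1) = 3*k-2 := by omega
    rw [e]
    exact (hW y hy).2.2
  have hVG : ∀ y, y ≠ p → closure (W y (k-1)) ⊆ W y (2*k-1) := by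
    intro y hy
    exact (hW y hy).1.closure_subset (by omega) (by omega)
  -- transfinite construction of the discrete set, along a well-ordering of X
  have wf : WellFounded (WellOrderingRel : X → X → Prop) := IsWellFounded.wf
  set d : X → Prop := wf.fix (fun y ih => y ≠ p ∧
      y ∉ thetaEven k {z | ∃ hz : WellOrderingRel z y, ih z hz} ∧
      ∀ z, ∀ hz : WellOrderingRel z y, ih z hz → y ∉ closure (W z (k-1))) with hdef
  set D := {y | d y} with hD
  have dmem : ∀ y, d y ↔ (y ≠ p ∧
      y ∉ thetaEven k {z | WellOrderingRel z y ∧ d z} ∧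
      ∀ z, WellOrderingRel z y → d z → y ∉ closure (W z (k-1))) := by
    intro y
    have hset : {z | ∃ _ : WellOrderingRel z y, d z} = {z | WellOrderingRel z y ∧ d z} := by
      ext z; simp [exists_prop]
    conv_lhs => rw [hdef, wf.fix_eq]
    rw [← hdef, hset]
  have hDsub : ∀ y ∈ D, y ≠ p := fun y hy => ((dmem y).1 hy).1
  -- D is S(2k)-discrete
  have hdisc : SEvenDiscrete k D := by
    intro y hyD
    obtain ⟨hyp, hyt, hyv⟩ := (dmem y).1 hyD
    obtain ⟨N, hN, hNe⟩ := notMem_thetaEven hyt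
    refine ⟨N ∩ W y (k-1), hN.inter hk (hVnhd y hyp), ?_⟩
    rw [Set.eq_singleton_iff_unique_mem]
    constructor
    · exact ⟨subset_closure ⟨hN.mem, (hVnhd y hyp).mem⟩, hyD⟩
    · rintro z ⟨hzc, hzD⟩
      rcases trichotomous_of WellOrderingRel z y with hzy | heq | hyz
      · exfalso
        have : z ∈ closure N ∩ {z' | WellOrderingRel z' y ∧ d z'} :=
          ⟨closure_mono inter_subset_left hzc, hzy, hzD⟩
        rw [hNe] at this
        exact this
      · exact heq
      · exact absurd (closure_mono inter_subset_right hzc)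
          (((dmem z).1 hzD).2.2 y hyz hyD)
  -- coverage of X \ {p}
  have hcov : ∀ z, z ≠ p → z ∈ thetaEven k D ∨ ∃ y ∈ D, z ∈ closure (W y (k-1)) := by
    intro z hzp
    by_contra hcon
    push_neg at hcon
    obtain ⟨ht, hv⟩ := hcon
    have hzD : z ∈ D := by
      rw [hD, mem_setOf_eq, dmem]
      refine ⟨hzp, fun hth => ht ?_, fun y _ hdy => hv y hdy⟩
      exact thetaEven_mono (fun w hw => hw.2) hth
    exact ht (subset_thetaEven hzD)
  -- cardinality of D
  have hcard : (#D) ≤ spreadEven k X := by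
    refine le_trans ?_ (le_sup_left : _ ≤ spreadEven k X)
    exact le_ciSup (Cardinal.bddAbove_range _) (⟨D, hdisc⟩ : {D' : Set X // SEvenDiscrete k D'})
  -- the H-sets
  set HS : Set X → Set X := fun S =>
    if hS : ∃ H, SOpenNhd k p H ∧ thetaEven k S ∩ H = ∅ then hS.choose else Set.univ with hHSdef
  have hHS1 : ∀ S, SOpenNhd k p (HS S) := by
    intro S
    simp only [hHSdef]
    split_ifs with hS
    · exact hS.choose_spec.1
    · exact SOpenNhd.univ p
  have hHS2 : ∀ S, (∃ H, SOpenNhd k p H ∧ thetaEven k S ∩ H = ∅) →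
      thetaEven k S ∩ HS S = ∅ := by
    intro S hS
    simp only [hHSdef]
    rw [dif_pos hS]
    exact hS.choose_spec.2
  -- the family B
  refine ⟨((fun y => (closure (W y (2*k-1)))ᶜ) '' D) ∪ (HS '' {S | S ⊆ D}), ?_, ?_, ?_⟩
  · -- cardinality
    have hs0 : Cardinal.aleph0 ≤ spreadEven k X := le_sup_right
    have hs1 : Cardinal.aleph0 ≤ 2 ^ spreadEven k X :=
      hs0.trans (Cardinal.cantor _).le
    refine le_trans (Cardinal.mk_union_le _ _) (Cardinal.add_le_of_le hs1 ?_ ?_)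
    · refine le_trans (Cardinal.mk_image_le) (hcard.trans ?_)
      exact (Cardinal.cantor _).le
    · refine le_trans (Cardinal.mk_image_le) ?_
      have : #{S : Set X | S ⊆ D} = 2 ^ (#D) := by
        rw [show {S : Set X | S ⊆ D} = 𝒫 D from rfl]
        exact Cardinal.mk_powerset D
      rw [this]
      exact Cardinal.power_le_power_left (by norm_num) hcard
  · -- all members are open S-neighborhoods of p
    rintro U (⟨y, hyD, rfl⟩ | ⟨S, _, rfl⟩)
    · exact hGnhd y (hDsub y hyD)
    · exact hHS1 S
  · -- the intersection is {p}
    apply Subset.antisymm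
    · intro z hz
      rw [mem_singleton_iff]
      by_contra hzp
      rcases hcov z hzp with hth | ⟨y, hyD, hzcl⟩
      · -- theta case
        set S := closure (W z (k-1)) ∩ D with hSdef
        have claim1 : z ∈ thetaEven k S := by
          intro U hU
          obtain ⟨w, hw1, hw2⟩ := hth (U ∩ W z (k-1)) (hU.inter hk (hVnhd z hzp))
          exact ⟨w, closure_mono inter_subset_left hw1,
            closure_mono inter_subset_right hw1, hw2⟩
        have claim2 : ∃ H, SOpenNhd k p H ∧ thetaEven k S ∩ H = ∅ := by
          refine ⟨(closure (W z (2*k-1)))ᶜ, hGnhd z hzp, ?_⟩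
          rw [Set.eq_empty_iff_forall_notMem]
          rintro w ⟨hwth, hwG⟩
          have hdn : SOpenNhd k w (closure (W z k))ᶜ := by
            refine (hW z hzp).1.downNhd hk (j := k) (by omega) ?_
            have e : k+(k-1) = 2*k-1 := by omega
            rw [e]
            exact hwG
          obtain ⟨v, hv1, hv2⟩ := hwth _ hdn
          have hv1' : v ∉ W z k :=
            closure_minimal (compl_subset_compl.2 subset_closure)
              (((hW z hzp).1.1 k (by omega)).isClosed_compl) hv1
          exact hv1' ((hW z hzp).1.closure_subset (by omega) (by omega) hv2.1)
        have hmem : HS S ∈ ((fun y => (closure (W y (2*k-1)))ᶜ) '' D) ∪ (HS '' {S | S ⊆ D}) :=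
          Or.inr ⟨S, fun w hw => hw.2, rfl⟩
        have : z ∈ thetaEven k S ∩ HS S := ⟨claim1, hz _ hmem⟩
        rw [hHS2 S claim2] at this
        exact this
      · -- closure V case
        have hmem : (closure (W y (2*k-1)))ᶜ ∈
            ((fun y => (closure (W y (2*k-1)))ᶜ) '' D) ∪ (HS '' {S | S ⊆ D}) :=
          Or.inl ⟨y, hyD, rfl⟩
        exact (hz _ hmem) (subset_closure (hVG y (hDsub y hyD) hzcl))
    · rintro z rfl
      intro U hU
      rcases hU with ⟨y, hyD, rfl⟩ | ⟨S, _, rfl⟩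
      · exact (hGnhd y (hDsub y hyD)).mem
      · exact (hHS1 S).mem

end Main

section Main2

variable [TopologicalSpace X]

lemma exists_base_even {k : ℕ} (hk : 1 ≤ k) (h : SSpace (3*k-1) X) (p : X) :
    ∃ B : Set (Set X), #B ≤ 2 ^ spreadOdd k X ∧ (∀ U ∈ B, SOpenNhd k p U) ∧
      (⋂ U ∈ B, closure U) = {p} := by
  classical
  obtain ⟨W, hW⟩ := sspace_chain hk h p
  have hVnhd : ∀ y, y ≠ p → SOpenNhd k y (W y (k-1)) := fun y hy =>
    (hW y hy).1.upNhd hk (by omega) (hW y hy).2.1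
  have hGnhd : ∀ y, y ≠ p → SOpenNhd k p (closure (W y (2*k-1)))ᶜ := by
    intro y hy
    refine (hW y hy).1.downNhd hk (j := 2*k-1) (by omega) ?_
    have e : 2*k-1+(k-1) = 3*k-2 := by omega
    rw [e]
    exact (hW y hy).2.2
  have hGcl : ∀ y, y ≠ p → closure ((closure (W y (2*k-1)))ᶜ) ⊆ (W y (2*k-1))ᶜ := by
    intro y hy
    exact closure_minimal (compl_subset_compl.2 subset_closure)
      (((hW y hy).1.1 (2*k-1) (by omega)).isClosed_compl)
  have hVsub : ∀ y, y ≠ p → W y (k-1) ⊆ W y (2*k-1) := fun y hy =>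
    (hW y hy).1.mono (2*k-1) (by omega) (k-1) (by omega)
  -- transfinite construction of the discrete set
  have wf : WellFounded (WellOrderingRel : X → X → Prop) := IsWellFounded.wf
  set d : X → Prop := wf.fix (fun y ih => y ≠ p ∧
      y ∉ thetaOdd k {z | ∃ hz : WellOrderingRel z y, ih z hz} ∧
      ∀ z, ∀ hz : WellOrderingRel z y, ih z hz → y ∉ W z (k-1)) with hdef
  set D := {y | d y} with hD
  have dmem : ∀ y, d y ↔ (y ≠ p ∧
      y ∉ thetaOdd k {z | WellOrderingRel z y ∧ d z} ∧
      ∀ z, WellOrderingRel z y → d z → y ∉ W z (k-1)) := by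
    intro y
    have hset : {z | ∃ _ : WellOrderingRel z y, d z} = {z | WellOrderingRel z y ∧ d z} := by
      ext z; simp [exists_prop]
    conv_lhs => rw [hdef, wf.fix_eq]
    rw [← hdef, hset]
  have hDsub : ∀ y ∈ D, y ≠ p := fun y hy => ((dmem y).1 hy).1
  -- D is S(2k-1)-discrete
  have hdisc : SOddDiscrete k D := by
    intro y hyD
    obtain ⟨hyp, hyt, hyv⟩ := (dmem y).1 hyD
    obtain ⟨N, hN, hNe⟩ := notMem_thetaOdd hyt
    refine ⟨N ∩ W y (k-1), hN.inter hk (hVnhd y hyp), ?_⟩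
    rw [Set.eq_singleton_iff_unique_mem]
    constructor
    · exact ⟨⟨hN.mem, (hVnhd y hyp).mem⟩, hyD⟩
    · rintro z ⟨hzc, hzD⟩
      rcases trichotomous_of WellOrderingRel z y with hzy | heq | hyz
      · exfalso
        have : z ∈ N ∩ {z' | WellOrderingRel z' y ∧ d z'} := ⟨hzc.1, hzy, hzD⟩
        rw [hNe] at this
        exact this
      · exact heq
      · exact absurd hzc.2 (((dmem z).1 hzD).2.2 y hyz hyD)
  -- coverage of X \ {p}
  have hcov : ∀ z, z ≠ p → z ∈ thetaOdd k D ∨ ∃ y ∈ D, z ∈ W y (k-1) := by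
    intro z hzp
    by_contra hcon
    push_neg at hcon
    obtain ⟨ht, hv⟩ := hcon
    have hzD : z ∈ D := by
      rw [hD, mem_setOf_eq, dmem]
      refine ⟨hzp, fun hth => ht ?_, fun y _ hdy => hv y hdy⟩
      exact thetaOdd_mono (fun w hw => hw.2) hth
    exact ht (subset_thetaOdd hzD)
  have hcard : (#D) ≤ spreadOdd k X := by
    refine le_trans ?_ (le_sup_left : _ ≤ spreadOdd k X)
    exact le_ciSup (Cardinal.bddAbove_range _) (⟨D, hdisc⟩ : {D' : Set X // SOddDiscrete k D'})
  -- the H-sets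
  set HS : Set X → Set X := fun S =>
    if hS : ∃ H, SOpenNhd k p H ∧ thetaOdd k S ∩ closure H = ∅ then hS.choose
    else Set.univ with hHSdef
  have hHS1 : ∀ S, SOpenNhd k p (HS S) := by
    intro S
    simp only [hHSdef]
    split_ifs with hS
    · exact hS.choose_spec.1
    · exact SOpenNhd.univ p
  have hHS2 : ∀ S, (∃ H, SOpenNhd k p H ∧ thetaOdd k S ∩ closure H = ∅) →
      thetaOdd k S ∩ closure (HS S) = ∅ := by
    intro S hS
    simp only [hHSdef]
    rw [dif_pos hS]
    exact hS.choose_spec.2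
  refine ⟨((fun y => (closure (W y (2*k-1)))ᶜ) '' D) ∪ (HS '' {S | S ⊆ D}), ?_, ?_, ?_⟩
  · have hs0 : Cardinal.aleph0 ≤ spreadOdd k X := le_sup_right
    have hs1 : Cardinal.aleph0 ≤ 2 ^ spreadOdd k X := hs0.trans (Cardinal.cantor _).le
    refine le_trans (Cardinal.mk_union_le _ _) (Cardinal.add_le_of_le hs1 ?_ ?_)
    · exact le_trans (Cardinal.mk_image_le) (hcard.trans (Cardinal.cantor _).le)
    · refine le_trans (Cardinal.mk_image_le) ?_
      have : #{S : Set X | S ⊆ D} = 2 ^ (#D) := Cardinal.mk_powerset D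
      rw [this]
      exact Cardinal.power_le_power_left (by norm_num) hcard
  · rintro U (⟨y, hyD, rfl⟩ | ⟨S, _, rfl⟩)
    · exact hGnhd y (hDsub y hyD)
    · exact hHS1 S
  · apply Subset.antisymm
    · intro z hz
      rw [mem_iInter₂] at hz
      rw [mem_singleton_iff]
      by_contra hzp
      rcases hcov z hzp with hth | ⟨y, hyD, hzV⟩
      · set S := W z (k-1) ∩ D with hSdef
        have claim1 : z ∈ thetaOdd k S := by
          intro U hU
          obtain ⟨w, hw1, hw2⟩ := hth (U ∩ W z (k-1)) (hU.inter hk (hVnhd z hzp))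
          exact ⟨w, hw1.1, hw1.2, hw2⟩
        have claim2 : ∃ H, SOpenNhd k p H ∧ thetaOdd k S ∩ closure H = ∅ := by
          refine ⟨(closure (W z (2*k-1)))ᶜ, hGnhd z hzp, ?_⟩
          rw [Set.eq_empty_iff_forall_notMem]
          rintro w ⟨hwth, hwG⟩
          have hwG' : w ∉ W z (2*k-1) := hGcl z hzp hwG
          have hwG'' : w ∉ closure (W z (2*k-2)) := fun hc =>
            hwG' ((hW z hzp).1.closure_subset (by omega) (by omega) hc)
          have hdn : SOpenNhd k w (closure (W z (k-1)))ᶜ := by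
            refine (hW z hzp).1.downNhd hk (j := k-1) (by omega) ?_
            have e : k-1+(k-1) = 2*k-2 := by omega
            rw [e]
            exact hwG''
          obtain ⟨v, hv1, hv2⟩ := hwth _ hdn
          exact hv1 (subset_closure hv2.1)
        have hmem : HS S ∈ ((fun y => (closure (W y (2*k-1)))ᶜ) '' D) ∪ (HS '' {S | S ⊆ D}) :=
          Or.inr ⟨S, fun w hw => hw.2, rfl⟩
        have : z ∈ thetaOdd k S ∩ closure (HS S) := ⟨claim1, hz _ hmem⟩
        rw [hHS2 S claim2] at this
        exact this
      · have hmem : (closure (W y (2*k-1)))ᶜ ∈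
            ((fun y => (closure (W y (2*k-1)))ᶜ) '' D) ∪ (HS '' {S | S ⊆ D}) :=
          Or.inl ⟨y, hyD, rfl⟩
        exact hGcl y (hDsub y hyD) (hz _ hmem) (hVsub y (hDsub y hyD) hzV)
    · rintro z rfl
      rw [mem_iInter₂]
      intro U hU
      rcases hU with ⟨y, hyD, rfl⟩ | ⟨S, _, rfl⟩
      · exact subset_closure (hGnhd y (hDsub y hyD)).mem
      · exact subset_closure (hHS1 S).mem

end Main2


theorem stmt18 (k : ℕ) (hk : 1 ≤ k) (X : Type u) [TopologicalSpace X]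
    (h : SSpace (3 * k - 1) X) :
    psiOdd k X ≤ 2 ^ spreadEven k X ∧ psiEven k X ≤ 2 ^ spreadOdd k X := by
  constructor
  · refine csInf_le' ⟨?_, fun x => exists_base_odd hk h x⟩
    exact (le_sup_right : Cardinal.aleph0 ≤ spreadEven k X).trans (Cardinal.cantor _).le
  · refine csInf_le' ⟨?_, fun x => exists_base_even hk h x⟩
    exact (le_sup_right : Cardinal.aleph0 ≤ spreadOdd k X).trans (Cardinal.cantor _).le
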